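/- Let (a,b,c) be a hyperbolic triple with 1/a+1/b+1/c < 1/2 and let e_1,...,e_r (r ≥ 2) be the exponents of any irreducible root system of rank r ≥ 2. Then Σ_{k∈{a,b,c}} Σ_{j=1}^r (1 + 2⌊e_j/k⌋) < Σ_{j=1}^r (1 + 2e_j). -/
import Mathlib

lemma sum_lhs (a b c : ℕ) (E : Multiset ℕ) :
    (E.map (fun e => (1 + 2 * (e / a)) + (1 + 2 * (e / b)) + (1 + 2 * (e / c)))).sum
      = 3 * E.card + 2 * (E.map (fun e => e / a + e / b + e / c)).sum := by
  induction E using Multiset.induction with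
  | empty => simp
  | cons x s ih => simp [ih]; ring

lemma sum_rhs (E : Multiset ℕ) :
    (E.map (fun e => 1 + 2 * e)).sum = E.card + 2 * E.sum := by
  induction E using Multiset.induction with
  | empty => simp
  | cons x s ih => simp [ih]; ring

lemma cast_div_sum_le (a b c : ℕ) (E : Multiset ℕ) :
    (((E.map (fun e => e / a + e / b + e / c)).sum : ℕ) : ℚ)
      ≤ (E.sum : ℚ) * ((1:ℚ)/a + 1/b + 1/c) := by
  induction E using Multiset.induction with
  | empty => simp
  | cons x s ih =>
    simp only [Multiset.map_cons, Multiset.sum_cons]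
    push_cast
    push_cast at ih
    have h3 : ((x / a : ℕ) : ℚ) ≤ (x : ℚ) / a := Nat.cast_div_le
    have h4 : ((x / b : ℕ) : ℚ) ≤ (x : ℚ) / b := Nat.cast_div_le
    have h5 : ((x / c : ℕ) : ℚ) ≤ (x : ℚ) / c := Nat.cast_div_le
    have hx : (x : ℚ) * ((1:ℚ)/a + 1/b + 1/c) = (x:ℚ)/a + (x:ℚ)/b + (x:ℚ)/c := by ring
    nlinarith [ih]

lemma key (a b c : ℕ) (hhyp : (1 : ℚ)/a + 1/b + 1/c < 1/2) (E : Multiset ℕ)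
    (hc0 : 0 < E.card) (hcard : 2 * E.card ≤ E.sum) :
    (E.map (fun e => (1 + 2 * (e / a)) + (1 + 2 * (e / b)) + (1 + 2 * (e / c)))).sum
      < (E.map (fun e => 1 + 2 * e)).sum := by
  rw [sum_lhs, sum_rhs]
  set T := (E.map (fun e => e / a + e / b + e / c)).sum with hT
  set S := E.sum with hS
  have hSpos : 0 < S := lt_of_lt_of_le (by omega) hcard
  have hTS : 2 * T < S := by
    have h1 : (T : ℚ) ≤ (S : ℚ) * ((1:ℚ)/a + 1/b + 1/c) := cast_div_sum_le a b c E
    have h6 : (S : ℚ) * ((1:ℚ)/a + 1/b + 1/c) < (S : ℚ) * (1/2) := by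
      apply mul_lt_mul_of_pos_left hhyp
      exact_mod_cast hSpos
    have : (2 * T : ℚ) < (S : ℚ) := by linarith
    exact_mod_cast this
  omega

lemma sumA (r : ℕ) (hr : 3 ≤ r) :
    2 * r ≤ (((Multiset.range r).map (· + 1)).sum) := by
  induction r with
  | zero => omega
  | succ n ih =>
    rw [Multiset.range_succ]
    simp only [Multiset.map_cons, Multiset.sum_cons]
    rcases Nat.lt_or_ge n 3 with h | h
    · interval_cases n <;> simp_all
    · have := ih (by omega); omega

lemma sumBC (r : ℕ) : (((Multiset.range r).map (fun j => 2 * j + 1)).sum) = r * r := by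
  induction r with
  | zero => simp
  | succ n ih =>
    rw [Multiset.range_succ]
    simp only [Multiset.map_cons, Multiset.sum_cons, ih]
    ring

/-- `E` is the multiset of exponents of an irreducible root system of rank `r`. -/
def IsIrreducibleExponents (r : ℕ) (E : Multiset ℕ) : Prop :=
  (E = (Multiset.range r).map (· + 1)) ∨
  (E = (Multiset.range r).map (fun j => 2 * j + 1)) ∨
  (4 ≤ r ∧ E = (r - 1) ::ₘ (Multiset.range (r - 1)).map (fun j => 2 * j + 1)) ∨
  (r = 6 ∧ E = {1, 4, 5, 7, 8, 11}) ∨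
  (r = 7 ∧ E = {1, 5, 7, 9, 11, 13, 17}) ∨
  (r = 8 ∧ E = {1, 7, 11, 13, 17, 19, 23, 29}) ∨
  (r = 4 ∧ E = {1, 5, 7, 11}) ∨
  (r = 2 ∧ E = {1, 5})

theorem inequality_of_mu_lt_half (a b c r : ℕ) (ha : 0 < a) (hab : a ≤ b) (hbc : b ≤ c)
    (hhyp : (1 : ℚ)/a + 1/b + 1/c < 1/2) (hr : 2 ≤ r)
    (E : Multiset ℕ) (hE : IsIrreducibleExponents r E) :
    (E.map (fun e => (1 + 2 * (e / a)) + (1 + 2 * (e / b)) + (1 + 2 * (e / c)))).sum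
      < (E.map (fun e => 1 + 2 * e)).sum := by
  rcases hE with hA | hBC | ⟨hr4, hD⟩ | ⟨hr6, hEx⟩ | ⟨hr7, hEx⟩ | ⟨hr8, hEx⟩ | ⟨hr4', hEx⟩
    | ⟨hr2, hEx⟩
  · -- A_r
    by_cases hr2 : r = 2
    · -- A_2 : all floors vanish since a ≥ 3
      subst hr2
      have hE2 : E = {1, 2} := by rw [hA]; rfl
      have ha3 : 3 ≤ a := by
        by_contra h
        push_neg at h
        have hb0 : (0:ℚ) ≤ ((b:ℚ))⁻¹ := by positivity
        have hc0 : (0:ℚ) ≤ ((c:ℚ))⁻¹ := by positivity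
        interval_cases a <;> norm_num at hhyp <;> linarith
      have hb3 : 3 ≤ b := le_trans ha3 hab
      have hc3 : 3 ≤ c := le_trans hb3 hbc
      rw [hE2]
      have d1 : 1 / a = 0 := Nat.div_eq_of_lt (by omega)
      have d2 : 2 / a = 0 := Nat.div_eq_of_lt (by omega)
      have d3 : 1 / b = 0 := Nat.div_eq_of_lt (by omega)
      have d4 : 2 / b = 0 := Nat.div_eq_of_lt (by omega)
      have d5 : 1 / c = 0 := Nat.div_eq_of_lt (by omega)
      have d6 : 2 / c = 0 := Nat.div_eq_of_lt (by omega)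
      simp [Multiset.insert_eq_cons, d1, d2, d3, d4, d5, d6]
    · subst hA
      apply key a b c hhyp
      · simp; omega
      · simp only [Multiset.card_map, Multiset.card_range]
        exact sumA r (by omega)
  · subst hBC
    apply key a b c hhyp
    · simp; omega
    · simp only [Multiset.card_map, Multiset.card_range, sumBC]
      exact Nat.mul_le_mul_right r hr
  · -- D_r
    subst hD
    obtain ⟨t, rfl⟩ : ∃ t, r = t + 1 := ⟨r - 1, by omega⟩
    have ht : 3 ≤ t := by omega
    apply key a b c hhyp
    · simp
    · simp only [Multiset.card_cons, Multiset.card_map, Multiset.card_range,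
        Multiset.sum_cons, Nat.add_sub_cancel, sumBC]
      nlinarith
  · subst hr6; subst hEx; apply key a b c hhyp <;> decide
  · subst hr7; subst hEx; apply key a b c hhyp <;> decide
  · subst hr8; subst hEx; apply key a b c hhyp <;> decide
  · subst hr4'; subst hEx; apply key a b c hhyp <;> decide
  · subst hr2; subst hEx; apply key a b c hhyp <;> decide
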